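/- Let ζ, θ, u, v : ℝ → ℝ be differentiable with, for all t: sin(ζ t) ≠ 0, sin(θ t) ≠ 0, u′(t) = cos(ζ t)/sin(ζ t), v′(t) = cos(θ t)/(sin(ζ t)·sin(θ t)). Fix s ∈ ℝ and define F : ℝ² → ℝ³ by F(t,s) = (t − s·sin(θ t)·sin(ζ t), u t − s·sin(θ t)·cos(ζ t), v t − s·cos(θ t)). Then at every (t,s) the Euclidean inner product of the two partial derivatives satisfies ⟨∂F/∂t, ∂F/∂s⟩ = −1/(sin(ζ t)·sin(θ t)). -/

import Mathlib

open Real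
open scoped RealInnerProductSpace

private lemma hasDerivAt_pi3 {f : ℝ → Fin 3 → ℝ} {f' : Fin 3 → ℝ} {x : ℝ}
    (h : ∀ i, HasDerivAt (fun t => f t i) (f' i) x) : HasDerivAt f f' x := by
  have h2 := (hasFDerivAt_pi.2 fun i => (h i).hasFDerivAt).hasDerivAt
  simpa using h2

private lemma hasDerivAt_euclidean {f : ℝ → EuclideanSpace ℝ (Fin 3)} {f' : EuclideanSpace ℝ (Fin 3)}
    {x : ℝ} (h : ∀ i, HasDerivAt (fun t => f t i) (f' i) x) : HasDerivAt f f' x :=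
  ((EuclideanSpace.equiv (Fin 3) ℝ).symm.toContinuousLinearMap.hasFDerivAt).comp_hasDerivAt
    x (hasDerivAt_pi3 (f := fun t => f t) (f' := f') h)

/-- Euler's parametrization of a developable (tangent) surface. -/
noncomputable def eulerF (ζ θ u v : ℝ → ℝ) (w : ℝ × ℝ) : EuclideanSpace ℝ (Fin 3) :=
  WithLp.toLp 2 ![w.1 - w.2 * sin (θ w.1) * sin (ζ w.1),
    u w.1 - w.2 * sin (θ w.1) * cos (ζ w.1),
    v w.1 - w.2 * cos (θ w.1)]

theorem euler_cross_term_of_first_fundamental_form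
    (ζ θ u v : ℝ → ℝ)
    (hζ : Differentiable ℝ ζ) (hθ : Differentiable ℝ θ)
    (hu : Differentiable ℝ u) (hv : Differentiable ℝ v)
    (hsinζ : ∀ t, sin (ζ t) ≠ 0) (hsinθ : ∀ t, sin (θ t) ≠ 0)
    (hu' : ∀ t, deriv u t = cos (ζ t) / sin (ζ t))
    (hv' : ∀ t, deriv v t = cos (θ t) / (sin (ζ t) * sin (θ t))) :
    ∀ t s : ℝ,
      (⟪deriv (fun t' => eulerF ζ θ u v (t', s)) t,
         deriv (fun s' => eulerF ζ θ u v (t, s')) s⟫ : ℝ) =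
        -1 / (sin (ζ t) * sin (θ t)) := by
  intro t s
  have h1 : HasDerivAt (fun t' => sin (θ t')) (cos (θ t) * deriv θ t) t := (hθ t).hasDerivAt.sin
  have h2 : HasDerivAt (fun t' => sin (ζ t')) (cos (ζ t) * deriv ζ t) t := (hζ t).hasDerivAt.sin
  have h3 : HasDerivAt (fun t' => cos (θ t')) (-sin (θ t) * deriv θ t) t := (hθ t).hasDerivAt.cos
  have h4 : HasDerivAt (fun t' => cos (ζ t')) (-sin (ζ t) * deriv ζ t) t := (hζ t).hasDerivAt.cos
  have hXt : HasDerivAt (fun t' => eulerF ζ θ u v (t', s))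
      (WithLp.toLp 2 ![1 - (s * (cos (θ t) * deriv θ t) * sin (ζ t) + s * sin (θ t) * (cos (ζ t) * deriv ζ t)),
         deriv u t - (s * (cos (θ t) * deriv θ t) * cos (ζ t)
            + s * sin (θ t) * (-sin (ζ t) * deriv ζ t)),
         deriv v t - s * (-sin (θ t) * deriv θ t)] : EuclideanSpace ℝ (Fin 3)) t := by
    apply hasDerivAt_euclidean
    intro i
    fin_cases i
    · simp [eulerF]; exact ((hasDerivAt_id t).sub ((h1.const_mul s).mul h2)).congr_deriv (by ring)
    · simp [eulerF]; exact ((hu t).hasDerivAt.sub ((h1.const_mul s).mul h4)).congr_deriv (by ring)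
    · simp [eulerF]; exact ((hv t).hasDerivAt.sub (h3.const_mul s)).congr_deriv (by ring)
  have hXs : HasDerivAt (fun s' => eulerF ζ θ u v (t, s'))
      (WithLp.toLp 2 ![-(sin (θ t) * sin (ζ t)), -(sin (θ t) * cos (ζ t)), -cos (θ t)] :
        EuclideanSpace ℝ (Fin 3)) s := by
    apply hasDerivAt_euclidean
    intro i
    fin_cases i
    · have := (hasDerivAt_const s t).sub
        (((hasDerivAt_id s).mul_const (sin (θ t))).mul_const (sin (ζ t)))
      simp [eulerF]; exact this.congr_deriv (by ring)
    · have := (hasDerivAt_const s (u t)).sub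
        (((hasDerivAt_id s).mul_const (sin (θ t))).mul_const (cos (ζ t)))
      simp [eulerF]; exact this.congr_deriv (by ring)
    · have := (hasDerivAt_const s (v t)).sub ((hasDerivAt_id s).mul_const (cos (θ t)))
      simp [eulerF]; exact this.congr_deriv (by ring)
  rw [hXt.deriv, hXs.deriv]
  simp only [PiLp.inner_apply, RCLike.inner_apply, conj_trivial, Fin.sum_univ_three,
    Matrix.cons_val_zero, Matrix.cons_val_one, Matrix.head_cons, Matrix.cons_val_two,
    Matrix.tail_cons, hu' t, hv' t, PiLp.toLp_apply]
  have hsθ := hsinθ t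
  have hsζ := hsinζ t
  have key : sin (θ t) ^ 2 * sin (ζ t) ^ 2 + sin (θ t) ^ 2 * cos (ζ t) ^ 2 + cos (θ t) ^ 2
      = 1 := by
    linear_combination sin (θ t) ^ 2 * sin_sq_add_cos_sq (ζ t) + sin_sq_add_cos_sq (θ t)
  rw [show (-1 : ℝ) = -(sin (θ t) ^ 2 * sin (ζ t) ^ 2 + sin (θ t) ^ 2 * cos (ζ t) ^ 2
      + cos (θ t) ^ 2) by rw [key]]
  field_simp
  linear_combination (s * cos (θ t) * deriv θ t * sin (ζ t) * sin (θ t) ^ 2) *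
    sin_sq_add_cos_sq (ζ t)
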